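/- For all integers m, k ≥ 1, d(0, m, s, k, 0) = (−1)^{binom(k+1,2)·m} · s^{binom(k+1,2)·m − k} · q^{k·m·(k·m+m+k−3)/4} · fac(k, x, q^m·s, m) · d(0, m, q^m·s, k−1, 0), where k·m·(k·m+m+k−3)/4 is an integer. -/

import Mathlib

open Finset

variable {K : Type*} [Field K]

noncomputable def qFibPos (q x t : K) : ℕ → K
  | 0 => 0
  | 1 => 1
  | n + 2 => x * qFibPos q x t (n + 1) + q ^ n * t * qFibPos q x t n

noncomputable def qFibNeg (q x t : K) : ℕ → K
  | 0 => 0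
  | 1 => q / t
  | m + 2 => (qFibNeg q x t m - x * qFibNeg q x t (m + 1)) * q ^ (m + 2) / t

/-- The Carlitz q-Fibonacci polynomial `f(n, x, t)` for `n : ℤ`, defined by `f 0 = 0`,
`f 1 = 1` and `f n = x * f (n-1) + q^(n-2) * t * f (n-2)`, solved backwards for `n < 0`. -/
noncomputable def qFib (q x t : K) : ℤ → K
  | Int.ofNat n => qFibPos q x t n
  | Int.negSucc m => qFibNeg q x t (m + 1)

/-- `fac(k, x, t, m) = ∏_{i=1}^{k} f(i·m, x, t)`. -/
noncomputable def qFac (q x t : K) (k m : ℕ) : K :=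
  ∏ i ∈ Finset.range k, qFib q x t (((i : ℤ) + 1) * m)

/-- The determinant
`d(n, m, s, k, j) = det( f(n+m(i+[i≥j]),x,s)^h · f(n+m(i+[i≥j])-1,x,qs)^{k-h} )_{i,h=0}^{k}`. -/
noncomputable def ddet (q x s : K) (n : ℤ) (m k j : ℕ) : K :=
  Matrix.det (Matrix.of fun i h : Fin (k + 1) =>
    qFib q x s (n + m * ((i : ℕ) + if j ≤ (i : ℕ) then 1 else 0)) ^ (h : ℕ) *
      qFib q x (q * s) (n + m * ((i : ℕ) + if j ≤ (i : ℕ) then 1 else 0) - 1) ^ (k - (h : ℕ)))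

section DetLemma

lemma det_pow_mul_pow_field {F : Type*} [Field F] (k : ℕ) (a b : Fin (k+1) → F)
    (hb : ∀ i, b i ≠ 0) :
    (Matrix.of fun i h : Fin (k+1) => a i ^ (h:ℕ) * b i ^ (k - (h:ℕ))).det
      = ∏ i : Fin (k+1), ∏ j ∈ Finset.Ioi i, (a j * b i - a i * b j) := by
  have hM : (Matrix.of fun i h : Fin (k+1) => a i ^ (h:ℕ) * b i ^ (k - (h:ℕ)))
      = Matrix.diagonal (fun i => b i ^ k) * Matrix.vandermonde (fun i => a i / b i) := by
    ext i h
    have hh : (h:ℕ) ≤ k := Nat.lt_succ_iff.mp h.isLt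
    simp only [Matrix.diagonal_mul, Matrix.vandermonde, Matrix.of_apply, div_pow]
    rw [pow_sub₀ _ (hb i) hh]
    ring
  rw [hM, Matrix.det_mul, Matrix.det_diagonal, Matrix.det_vandermonde]
  have h2 : ∀ i j : Fin (k+1), a j * b i - a i * b j
      = b i * (b j * (a j / b j - a i / b i)) := by
    intro i j
    field_simp [hb i, hb j]
  have step1 : ∀ i : Fin (k+1), ∏ j ∈ Ioi i, (a j * b i - a i * b j)
      = b i ^ (k - (i:ℕ)) * ∏ j ∈ Ioi i, (b j * (a j / b j - a i / b i)) := by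
    intro i
    rw [Finset.prod_congr rfl (fun j _ => h2 i j), Finset.prod_mul_distrib,
      Finset.prod_const, Fin.card_Ioi]
    congr 2 <;> omega
  rw [Finset.prod_congr rfl (fun i _ => step1 i), Finset.prod_mul_distrib]
  have step2 : ∏ i : Fin (k+1), ∏ j ∈ Ioi i, (b j * (a j / b j - a i / b i))
      = (∏ i : Fin (k+1), ∏ j ∈ Ioi i, b j) *
        ∏ i : Fin (k+1), ∏ j ∈ Ioi i, (a j / b j - a i / b i) := by
    rw [← Finset.prod_mul_distrib]
    exact Finset.prod_congr rfl fun i _ => Finset.prod_mul_distrib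
  rw [step2]
  have step3 : (∏ i : Fin (k+1), ∏ j ∈ Ioi i, b j) = ∏ j : Fin (k+1), b j ^ (j:ℕ) := by
    rw [Finset.prod_comm' (by simp [Finset.mem_Ioi, Finset.mem_Iio] :
      ∀ i j : Fin (k+1), i ∈ univ ∧ j ∈ Ioi i ↔ i ∈ Iio j ∧ j ∈ univ)]
    exact Finset.prod_congr rfl fun j _ => by
      rw [Finset.prod_const, Fin.card_Iio]
  rw [step3]
  have step4 : (∏ i : Fin (k+1), b i ^ k)
      = (∏ i : Fin (k+1), b i ^ (k - (i:ℕ))) * ∏ i : Fin (k+1), b i ^ (i:ℕ) := by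
    rw [← Finset.prod_mul_distrib]
    refine Finset.prod_congr rfl fun i _ => ?_
    rw [← pow_add]
    congr 1
    omega
  rw [step4]
  ring

lemma det_pow_mul_pow {R : Type*} [CommRing R] (k : ℕ) (a b : Fin (k+1) → R) :
    (Matrix.of fun i h : Fin (k+1) => a i ^ (h:ℕ) * b i ^ (k - (h:ℕ))).det
      = ∏ i : Fin (k+1), ∏ j ∈ Finset.Ioi i, (a j * b i - a i * b j) := by
  let σ := MvPolynomial (Fin (k+1) × Bool) ℤ
  let F := FractionRing σ
  let A : Fin (k+1) → σ := fun i => MvPolynomial.X (i, true)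
  let B : Fin (k+1) → σ := fun i => MvPolynomial.X (i, false)
  have hinj : Function.Injective (algebraMap σ F) := IsFractionRing.injective σ F
  have key : (Matrix.of fun i h : Fin (k+1) => A i ^ (h:ℕ) * B i ^ (k - (h:ℕ))).det
      = ∏ i : Fin (k+1), ∏ j ∈ Finset.Ioi i, (A j * B i - A i * B j) := by
    apply hinj
    rw [RingHom.map_det, map_prod]
    have h1 : ((algebraMap σ F)).mapMatrix
        (Matrix.of fun i h : Fin (k+1) => A i ^ (h:ℕ) * B i ^ (k - (h:ℕ)))
        = Matrix.of fun i h : Fin (k+1) =>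
            (algebraMap σ F (A i)) ^ (h:ℕ) * (algebraMap σ F (B i)) ^ (k - (h:ℕ)) := by
      ext i h
      simp
    rw [h1, det_pow_mul_pow_field k _ _ (fun i => by
      simp only [ne_eq, map_eq_zero_iff _ hinj]
      exact MvPolynomial.X_ne_zero _)]
    refine Finset.prod_congr rfl fun i _ => ?_
    rw [map_prod]
    refine Finset.prod_congr rfl fun j _ => ?_
    simp
  let φ : σ →+* R := (MvPolynomial.eval₂Hom (Int.castRingHom R)
    (fun p => if p.2 then a p.1 else b p.1))
  have hA : ∀ i, φ (A i) = a i := fun i => by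
    show (MvPolynomial.eval₂Hom (Int.castRingHom R) fun p => if p.2 then a p.1 else b p.1) (MvPolynomial.X (i, true)) = a i
    rw [MvPolynomial.eval₂Hom_X']
    simp
  have hB : ∀ i, φ (B i) = b i := fun i => by
    show (MvPolynomial.eval₂Hom (Int.castRingHom R) fun p => if p.2 then a p.1 else b p.1) (MvPolynomial.X (i, false)) = b i
    rw [MvPolynomial.eval₂Hom_X']
    simp
  have := congrArg φ key
  rw [RingHom.map_det, map_prod] at this
  have h2 : φ.mapMatrix (Matrix.of fun i h : Fin (k+1) => A i ^ (h:ℕ) * B i ^ (k - (h:ℕ)))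
      = Matrix.of fun i h : Fin (k+1) => a i ^ (h:ℕ) * b i ^ (k - (h:ℕ)) := by
    ext i h
    simp [hA, hB]
  rw [h2] at this
  rw [this]
  refine Finset.prod_congr rfl fun i _ => ?_
  rw [map_prod]
  refine Finset.prod_congr rfl fun j _ => ?_
  simp [hA, hB]
end DetLemma

section FibLemmas

lemma qFib_natCast (q x t : K) (n : ℕ) : qFib q x t (n : ℤ) = qFibPos q x t n := rfl

lemma qFib_neg_one (q x t : K) : qFib q x t (-1) = q / t := rfl

-- f(r-1) as a function of r : ℕ
noncomputable def qFibM (q x t : K) : ℕ → K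
  | 0 => q / t
  | r + 1 => qFibPos q x t r

lemma qFib_sub_one (q x t : K) (r : ℕ) : qFib q x t ((r : ℤ) - 1) = qFibM q x t r := by
  cases r with
  | zero => rfl
  | succ r => show qFib q x t ((r+1 : ℤ) - 1) = _; norm_num [qFib_natCast, qFibM]

lemma qFibM_rec (q x t : K) (hq : q ≠ 0) (ht : t ≠ 0) (n r : ℕ) :
    qFibM q x (q ^ (n+1) * t) (r + 2)
      = x * qFibM q x (q ^ (n+1) * t) (r + 1) + q ^ (n + r) * t * qFibM q x (q ^ (n+1) * t) r := by
  cases r with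
  | zero =>
    show qFibPos q x (q^(n+1)*t) 1 = x * qFibPos q x (q^(n+1)*t) 0 + q^(n+0) * t * (q / (q^(n+1)*t))
    rw [qFibPos, qFibPos]
    field_simp
    ring
  | succ r =>
    show qFibPos q x (q^(n+1)*t) (r + 2) = x * qFibPos q x (q^(n+1)*t) (r+1) + _ * qFibPos q x (q^(n+1)*t) r
    rw [qFibPos]
    congr 1
    ring

/-- Addition formula: `f(n+r, t) = f(n+1,t) f(r, q^n t) + q^n t f(n,t) f(r-1, q^{n+1} t)`. -/
lemma qFib_add (q x t : K) (hq : q ≠ 0) (ht : t ≠ 0) (n r : ℕ) :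
    qFibPos q x t (n + r)
      = qFibPos q x t (n + 1) * qFibPos q x (q ^ n * t) r
        + q ^ n * t * qFibPos q x t n * qFibM q x (q ^ (n+1) * t) r := by
  induction r using Nat.strong_induction_on with
  | _ r ih =>
    match r with
    | 0 =>
      show qFibPos q x t n = qFibPos q x t (n+1) * qFibPos q x (q^n*t) 0
          + q^n * t * qFibPos q x t n * (q / (q^(n+1)*t))
      rw [qFibPos]
      field_simp
      ring
    | 1 =>
      show qFibPos q x t (n+1) = qFibPos q x t (n+1) * qFibPos q x (q^n*t) 1
          + q^n * t * qFibPos q x t n * qFibPos q x (q^(n+1)*t) 0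
      rw [qFibPos, qFibPos]
      ring
    | (r + 2) =>
      have h0 := ih r (by omega)
      have h1 := ih (r+1) (by omega)
      have e1 : n + (r + 2) = (n + r) + 2 := by ring
      rw [e1, qFibPos]
      have e2 : n + r + 1 = n + (r + 1) := by ring
      rw [e2, h1, h0, qFibM_rec q x t hq ht n r]
      rw [show qFibPos q x (q^n*t) (r+2) = x * qFibPos q x (q^n*t) (r + 1) + q ^ r * (q^n*t) * qFibPos q x (q^n*t) r from rfl]
      rw [show q ^ (n + r) = q ^ n * q ^ r from pow_add q n r]
      ring

/-- Cassini-type identity. -/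
lemma qFib_cassini (q x t : K) (n : ℕ) :
    qFibPos q x t (n+2) * qFibPos q x (q*t) n - qFibPos q x t (n+1) * qFibPos q x (q*t) (n+1)
      = (-1 : K) ^ (n+1) * q ^ (n*(n+1)/2) * t ^ n := by
  induction n with
  | zero => simp [qFibPos]
  | succ n ih =>
    have e1 : qFibPos q x t (n+3) = x * qFibPos q x t (n+2) + q^(n+1) * t * qFibPos q x t (n+1) := rfl
    have e2 : qFibPos q x (q*t) (n+2) = x * qFibPos q x (q*t) (n+1) + q^n * (q*t) * qFibPos q x (q*t) n := rfl
    have e3 : (n+1)*(n+2)/2 = n*(n+1)/2 + (n+1) := by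
      have h1 := Nat.mul_div_cancel' (Nat.even_mul_succ_self n).two_dvd
      have h2 := Nat.mul_div_cancel' (Nat.even_mul_succ_self (n+1)).two_dvd
      have h3 : (n+1)*(n+2) = n*(n+1) + 2*(n+1) := by ring
      omega
    rw [show n+1+2 = n+3 from rfl, e1, e2, e3]
    have : qFibPos q x t (n+2) * qFibPos q x (q*t) (n+1) -
        qFibPos q x t (n+1) * (q^n * (q*t) * qFibPos q x (q*t) n) = - (q^(n+1) * t) *
        (qFibPos q x t (n+2) * qFibPos q x (q*t) n - qFibPos q x t (n+1) * qFibPos q x (q*t) (n+1)) →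
        True := fun _ => trivial
    calc (x * qFibPos q x t (n+2) + q^(n+1) * t * qFibPos q x t (n+1)) * qFibPos q x (q*t) (n+1)
          - qFibPos q x t (n+2) * (x * qFibPos q x (q*t) (n+1) + q^n * (q*t) * qFibPos q x (q*t) n)
        = (-(q^(n+1) * t)) * (qFibPos q x t (n+2) * qFibPos q x (q*t) n
            - qFibPos q x t (n+1) * qFibPos q x (q*t) (n+1)) := by
          rw [show q^(n+1) = q^n * q from pow_succ q n]
          ring
      _ = (-1:K)^(n+1+1) * q^(n*(n+1)/2 + (n+1)) * t^(n+1) := by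
          rw [ih, pow_add q, pow_succ (-1:K) (n+1), pow_succ t]
          ring
end FibLemmas

lemma prod_Ioi_const_mul (k : ℕ) (c : K) (G : Fin (k+1) → Fin (k+1) → K) :
    ∏ i : Fin (k+1), ∏ j ∈ Ioi i, (c * G i j)
      = c ^ (k*(k+1)/2) * ∏ i : Fin (k+1), ∏ j ∈ Ioi i, G i j := by
  have h1 : ∀ i : Fin (k+1), ∏ j ∈ Ioi i, (c * G i j)
      = c ^ (k - (i:ℕ)) * ∏ j ∈ Ioi i, G i j := by
    intro i
    rw [Finset.prod_mul_distrib, Finset.prod_const, Fin.card_Ioi]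
    congr 2 <;> omega
  rw [Finset.prod_congr rfl (fun i _ => h1 i), Finset.prod_mul_distrib,
    Finset.prod_pow_eq_pow_sum]
  congr 2
  rw [Fin.sum_univ_eq_sum_range (fun i => k - i) (k+1)]
  have hsum : ∑ j ∈ Finset.range (k+1), (k - j) = ∑ j ∈ Finset.range (k+1), j :=
    Finset.sum_range_reflect (fun j => j) (k+1)
  rw [hsum, Finset.sum_range_id]
  simp only [Nat.add_sub_cancel]
  rw [Nat.mul_comm]

/-- `ddet` at `n = 0`, `j = 0` as a product over pairs. -/
lemma ddet_eq_prod (q x s : K) (m k : ℕ) :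
    ddet q x s 0 m k 0
      = ∏ i : Fin (k+1), ∏ j ∈ Ioi i,
          (qFibPos q x s (m*((j:ℕ)+1)) * qFibM q x (q*s) (m*((i:ℕ)+1))
            - qFibPos q x s (m*((i:ℕ)+1)) * qFibM q x (q*s) (m*((j:ℕ)+1))) := by
  rw [ddet]
  have hM : (Matrix.of fun i h : Fin (k + 1) =>
      qFib q x s (0 + m * ((i : ℕ) + if 0 ≤ (i : ℕ) then 1 else 0)) ^ (h : ℕ) *
        qFib q x (q * s) (0 + m * ((i : ℕ) + if 0 ≤ (i : ℕ) then 1 else 0) - 1) ^ (k - (h : ℕ)))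
      = Matrix.of fun i h : Fin (k+1) =>
          (qFibPos q x s (m*((i:ℕ)+1))) ^ (h:ℕ) * (qFibM q x (q*s) (m*((i:ℕ)+1))) ^ (k - (h:ℕ)) := by
    ext i h
    have e : (0 : ℤ) + (m:ℤ) * ((i:ℕ) + if (0:ℕ) ≤ (i:ℕ) then 1 else 0)
        = ((m * ((i:ℕ)+1) : ℕ) : ℤ) := by
      simp only [Nat.zero_le, if_true]
      push_cast
      ring
    rw [Matrix.of_apply, Matrix.of_apply, e, qFib_natCast, qFib_sub_one]
  rw [hM, det_pow_mul_pow]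

theorem ddet_zero_recurrence (q x s : K) (hq : q ≠ 0) (hs : s ≠ 0)
    (m k : ℕ) (hm : 1 ≤ m) (hk : 1 ≤ k) :
    ddet q x s 0 m k 0 =
      (-1 : K) ^ ((k + 1).choose 2 * m) *
      s ^ (((k + 1).choose 2 : ℤ) * m - k) *
      q ^ ((k * m * (k * m + m + k - 3) : ℤ) / 4) *
      qFac q x (q ^ m * s) k m *
      ddet q x (q ^ m * s) 0 m (k - 1) 0 := by
  obtain ⟨M, rfl⟩ : ∃ M, m = M + 1 := ⟨m - 1, by omega⟩
  obtain ⟨N, rfl⟩ : ∃ N, k = N + 1 := ⟨k - 1, by omega⟩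
  simp only [Nat.add_sub_cancel]
  have hqs : q * s ≠ 0 := mul_ne_zero hq hs
  set A : ℕ → K := fun i => qFibPos q x (q^(M+1) * s) ((M+1)*i) with hA
  set B : ℕ → K := fun i => qFibM q x (q^(M+1+1) * s) ((M+1)*i) with hB
  set α : K := qFibPos q x s (M+1+1) with hα
  set β : K := q^(M+1) * s * qFibPos q x s (M+1) with hβ
  set γ : K := qFibPos q x (q*s) (M+1) with hγ
  set δ : K := q^(M+1) * s * qFibPos q x (q*s) M with hδ
  have ha : ∀ i : ℕ, qFibPos q x s ((M+1)*(i+1)) = α * A i + β * B i := by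
    intro i
    have h := qFib_add q x s hq hs (M+1) ((M+1)*i)
    rw [show (M+1) + (M+1)*i = (M+1)*(i+1) by ring] at h
    rw [h, hα, hβ, hA, hB]
  have hb : ∀ i : ℕ, qFibM q x (q*s) ((M+1)*(i+1)) = γ * A i + δ * B i := by
    intro i
    have h := qFib_add q x (q*s) hq hqs M ((M+1)*i)
    rw [show q^M * (q*s) = q^(M+1) * s by rw [pow_succ]; ring,
        show q^(M+1) * (q*s) = q^(M+1+1) * s by rw [pow_succ _ (M+1)]; ring] at h
    rw [show (M+1)*(i+1) = (M + (M+1)*i) + 1 by ring]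
    rw [show qFibM q x (q*s) ((M + (M+1)*i) + 1) = qFibPos q x (q*s) (M + (M+1)*i) from rfl, h,
      hγ, hδ, hA, hB]
  set c : K := α * δ - β * γ with hcdef
  have hpair : ∀ i j : ℕ,
      qFibPos q x s ((M+1)*(j+1)) * qFibM q x (q*s) ((M+1)*(i+1))
        - qFibPos q x s ((M+1)*(i+1)) * qFibM q x (q*s) ((M+1)*(j+1))
      = c * (A j * B i - A i * B j) := by
    intro i j
    rw [ha, hb, ha, hb, hcdef]
    ring
  have hc : c = (-1:K)^(M+1) * q^((M+1)*(M+1+1)/2) * s^(M+1) := by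
    have hcas := qFib_cassini q x s M
    have h1 : c = q^(M+1) * s * (qFibPos q x s (M+2) * qFibPos q x (q*s) M
        - qFibPos q x s (M+1) * qFibPos q x (q*s) (M+1)) := by
      rw [hcdef, hα, hβ, hγ, hδ]
      ring
    rw [h1, hcas]
    have he : (M+1)*(M+1+1)/2 = (M+1) + M*(M+1)/2 := by
      have h1 := Nat.mul_div_cancel' (Nat.even_mul_succ_self M).two_dvd
      have h2 := Nat.mul_div_cancel' (Nat.even_mul_succ_self (M+1)).two_dvd
      have h3 : (M+1)*(M+1+1) = M*(M+1) + 2*(M+1) := by ring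
      omega
    rw [he, pow_add]
    ring
  rw [ddet_eq_prod, ddet_eq_prod]
  rw [Finset.prod_congr rfl (fun (i : Fin (N+1+1)) _ =>
    Finset.prod_congr rfl (fun (j : Fin (N+1+1)) _ => hpair (i:ℕ) (j:ℕ)))]
  rw [prod_Ioi_const_mul]
  rw [Fin.prod_univ_succ (fun i : Fin (N+1+1) =>
    ∏ j ∈ Ioi i, (A (j:ℕ) * B (i:ℕ) - A (i:ℕ) * B (j:ℕ)))]
  have hA0 : A 0 = 0 := by rw [hA]; simp only [Nat.mul_zero]; rfl
  have hrow0 : (∏ j ∈ Ioi (0 : Fin (N+1+1)),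
        (A (j:ℕ) * B ((0 : Fin (N+1+1)):ℕ) - A ((0 : Fin (N+1+1)):ℕ) * B (j:ℕ)))
      = B 0 ^ (N+1) * ∏ j : Fin (N+1), A ((j:ℕ)+1) := by
    rw [Fin.prod_Ioi_zero]
    rw [show (∏ j : Fin (N+1), (A ((j.succ : Fin (N+1+1)):ℕ) * B ((0 : Fin (N+1+1)):ℕ)
          - A ((0 : Fin (N+1+1)):ℕ) * B ((j.succ : Fin (N+1+1)):ℕ)))
        = ∏ j : Fin (N+1), (B 0 * A ((j:ℕ)+1)) from
      Finset.prod_congr rfl fun j _ => by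
        simp only [Fin.val_succ, Fin.val_zero, hA0]
        ring]
    rw [Finset.prod_mul_distrib, Finset.prod_const]
    simp
  have hrest : (∏ i : Fin (N+1), ∏ j ∈ Ioi (Fin.succ i),
        (A (j:ℕ) * B ((Fin.succ i : Fin (N+1+1)):ℕ) - A ((Fin.succ i : Fin (N+1+1)):ℕ) * B (j:ℕ)))
      = ∏ i : Fin (N+1), ∏ j ∈ Ioi i,
          (qFibPos q x (q^(M+1)*s) ((M+1)*((j:ℕ)+1)) * qFibM q x (q*(q^(M+1)*s)) ((M+1)*((i:ℕ)+1))
            - qFibPos q x (q^(M+1)*s) ((M+1)*((i:ℕ)+1)) * qFibM q x (q*(q^(M+1)*s)) ((M+1)*((j:ℕ)+1))) := by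
    refine Finset.prod_congr rfl fun i _ => ?_
    rw [Fin.prod_Ioi_succ]
    refine Finset.prod_congr rfl fun j _ => ?_
    rw [hA, hB, show q*(q^(M+1)*s) = q^(M+1+1)*s by rw [pow_succ _ (M+1)]; ring]
    simp only [Fin.val_succ]
  rw [hrow0, hrest]
  have hfac : qFac q x (q^(M+1) * s) (N+1) (M+1) = ∏ j : Fin (N+1), A ((j:ℕ)+1) := by
    rw [qFac, Fin.prod_univ_eq_prod_range (fun j => A (j+1)) (N+1)]
    refine Finset.prod_congr rfl fun i _ => ?_
    rw [show ((i:ℤ)+1) * ((M+1 : ℕ):ℤ) = (((i+1)*(M+1) : ℕ) : ℤ) by push_cast; ring,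
      qFib_natCast, hA]
    rw [show (i+1)*(M+1) = (M+1)*(i+1) by ring]
  rw [← hfac]
  have hchoose : (N+1+1).choose 2 = (N+1)*(N+1+1)/2 := by
    rw [Nat.choose_two_right]
    simp only [Nat.add_sub_cancel]
    rw [Nat.mul_comm]
  set u : ℕ := (M+1)*(M+1+1)/2 with hu
  set v : ℕ := (N+1)*(N+1+1)/2 with hv
  have hu2 : 2 * u = (M+1) * (M+1+1) := Nat.mul_div_cancel' (Nat.even_mul_succ_self (M+1)).two_dvd
  have hv2 : 2 * v = (N+1) * (N+1+1) := Nat.mul_div_cancel' (Nat.even_mul_succ_self (N+1)).two_dvd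
  have hnum : ((N+1 : ℕ) : ℤ) * ((M+1 : ℕ) : ℤ) * (((N+1 : ℕ):ℤ) * ((M+1 : ℕ):ℤ)
        + ((M+1 : ℕ):ℤ) + ((N+1 : ℕ):ℤ) - 3)
      = 4 * (((u*v : ℕ) : ℤ) - (((M+1)*(N+1) : ℕ) : ℤ)) := by
    have hu2' : (2 : ℤ) * (u : ℕ) = ((M:ℤ)+1) * ((M:ℤ)+1+1) := by exact_mod_cast congrArg (Nat.cast : ℕ → ℤ) hu2
    have hv2' : (2 : ℤ) * (v : ℕ) = ((N:ℤ)+1) * ((N:ℤ)+1+1) := by exact_mod_cast congrArg (Nat.cast : ℕ → ℤ) hv2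
    push_cast
    linear_combination (-2*((v:ℕ):ℤ)) * hu2' + (-(((M:ℤ)+1) * ((M:ℤ)+1+1))) * hv2'
  have hquot : (((N+1 : ℕ) : ℤ) * ((M+1 : ℕ) : ℤ) * (((N+1 : ℕ):ℤ) * ((M+1 : ℕ):ℤ)
        + ((M+1 : ℕ):ℤ) + ((N+1 : ℕ):ℤ) - 3)) / 4
      = ((u*v : ℕ) : ℤ) - (((M+1)*(N+1) : ℕ) : ℤ) := by
    rw [hnum, Int.mul_ediv_cancel_left _ (by norm_num : (4:ℤ) ≠ 0)]
  rw [hquot, hchoose]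
  rw [show ((((N+1)*(N+1+1)/2 : ℕ) : ℤ) * ((M+1 : ℕ) : ℤ) - ((N+1 : ℕ) : ℤ))
      = ((v*(M+1) : ℕ) : ℤ) - ((N+1 : ℕ) : ℤ) by rw [hv]; push_cast; ring]
  rw [zpow_sub₀ hs, zpow_natCast, zpow_natCast, zpow_sub₀ hq, zpow_natCast, zpow_natCast]
  rw [hc]
  rw [show B 0 = q / (q^(M+1+1) * s) from rfl]
  have hqp : q^(M+1+1) * s ≠ 0 := mul_ne_zero (pow_ne_zero _ hq) hs
  set F : K := qFac q x (q ^ (M + 1) * s) (N + 1) (M + 1) with hF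
  set P : K := ∏ i : Fin (N + 1),
          ∏ j ∈ Ioi i,
            (qFibPos q x (q ^ (M + 1) * s) ((M + 1) * ((j:ℕ) + 1)) *
                qFibM q x (q * (q ^ (M + 1) * s)) ((M + 1) * ((i:ℕ) + 1)) -
              qFibPos q x (q ^ (M + 1) * s) ((M + 1) * ((i:ℕ) + 1)) *
                qFibM q x (q * (q ^ (M + 1) * s)) ((M + 1) * ((j:ℕ) + 1))) with hP
  rw [div_pow, mul_pow]
  field_simp
  ring
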